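/- Let Φ : ℕ → ℝ_{>0} be any function taking positive real values. Then the set of real numbers θ > 0 such that the inequality 0 < ‖ n^θ ‖ ≤ Φ(n) has infinitely many solutions in positive integers n is an uncountable set which is dense in (0, ∞). -/
import Mathlib


/-- Distance from a real number to the nearest integer. -/
noncomputable def distNearestInt (x : ℝ) : ℝ := |x - round x|

open Set Metric

lemma dni_le (x : ℝ) (m : ℤ) : distNearestInt x ≤ |x - m| := by
  rcases eq_or_ne m (round x) with h | h
  · simp [distNearestInt, h]
  · have h1 : |x - round x| ≤ 1 / 2 := abs_sub_round x
    have h2 : (1 : ℝ) ≤ |(m : ℝ) - round x| := by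
      have hne : (m - round x : ℤ) ≠ 0 := sub_ne_zero.2 h
      have := Int.one_le_abs hne
      calc (1 : ℝ) ≤ ((|m - round x| : ℤ) : ℝ) := by exact_mod_cast this
        _ = |(m : ℝ) - round x| := by push_cast; rfl
    have h3 : |(m : ℝ) - round x| ≤ |(m : ℝ) - x| + |x - round x| := abs_sub_le _ _ _
    have h4 : |(m : ℝ) - x| = |x - m| := abs_sub_comm _ _
    rw [distNearestInt]
    linarith
  
lemma dni_eq_infDist (x : ℝ) :
    distNearestInt x = infDist x (Set.range ((↑) : ℤ → ℝ)) := by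
  apply le_antisymm
  · rw [← not_lt]
    intro hlt
    obtain ⟨y, ⟨m, rfl⟩, hy⟩ := (infDist_lt_iff (⟨(0 : ℝ), ⟨0, by simp⟩⟩ : Set.Nonempty (Set.range ((↑) : ℤ → ℝ)))).1 hlt
    rw [Real.dist_eq] at hy
    exact absurd hy (not_lt.2 (dni_le x m))
  · have : infDist x (Set.range ((↑) : ℤ → ℝ)) ≤ dist x (round x : ℝ) :=
      infDist_le_dist_of_mem ⟨round x, rfl⟩
    rwa [Real.dist_eq] at this

lemma dni_continuous : Continuous distNearestInt := by
  have : distNearestInt = fun x => infDist x (Set.range ((↑) : ℤ → ℝ)) :=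
    funext dni_eq_infDist
  rw [this]
  exact continuous_infDist_pt _

lemma dni_pos {x : ℝ} {m : ℤ} (h1 : (m : ℝ) < x) (h2 : x < m + 1) :
    0 < distNearestInt x := by
  rw [distNearestInt, abs_pos, sub_ne_zero]
  intro h
  have hm : (m : ℝ) < (round x : ℝ) := by rw [← h]; exact h1
  have hm2 : ((round x : ℝ)) < (m : ℝ) + 1 := by rw [← h]; exact h2
  have : m < round x := by exact_mod_cast hm
  have : round x < m + 1 := by exact_mod_cast hm2
  omega

/-- The "good" set from the statement. -/
def goodSet (Φ : ℕ → ℝ) : Set ℝ :=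
  {θ : ℝ | 0 < θ ∧
    {n : ℕ | 0 < n ∧ 0 < distNearestInt ((n : ℝ) ^ θ) ∧
      distNearestInt ((n : ℝ) ^ θ) ≤ Φ n}.Infinite}

def Uset (Φ : ℕ → ℝ) (N : ℕ) : Set ℝ :=
  {θ : ℝ | 0 < θ ∧ ∃ n : ℕ, N ≤ n ∧ 0 < n ∧
    0 < distNearestInt ((n : ℝ) ^ θ) ∧ distNearestInt ((n : ℝ) ^ θ) < Φ n}

def Vset (Φ : ℕ → ℝ) (N : ℕ) : Set ℝ := Uset Φ N ∪ Set.Iio ((N : ℝ) + 1)⁻¹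

lemma continuous_rpow_nat (n : ℕ) (hn : 0 < n) :
    Continuous (fun θ : ℝ => (n : ℝ) ^ θ) := by
  have hpos : (0 : ℝ) < (n : ℝ) := by exact_mod_cast hn
  have : (fun θ : ℝ => (n : ℝ) ^ θ) = fun θ => Real.exp (Real.log n * θ) := by
    funext θ
    rw [Real.rpow_def_of_pos hpos]
  rw [this]
  exact Real.continuous_exp.comp (continuous_const.mul continuous_id)

lemma Uset_open (Φ : ℕ → ℝ) (N : ℕ) : IsOpen (Uset Φ N) := by
  have : Uset Φ N = Set.Ioi 0 ∩
      ⋃ n : ℕ, ⋃ _ : N ≤ n ∧ 0 < n,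
        (fun θ : ℝ => distNearestInt ((n : ℝ) ^ θ)) ⁻¹' (Set.Ioi 0 ∩ Set.Iio (Φ n)) := by
    ext θ
    constructor
    · rintro ⟨h0, n, h1, h2, h3, h4⟩
      exact ⟨h0, Set.mem_iUnion.2 ⟨n, Set.mem_iUnion.2 ⟨⟨h1, h2⟩, h3, h4⟩⟩⟩
    · rintro ⟨h0, hmem⟩
      obtain ⟨n, hmem⟩ := Set.mem_iUnion.1 hmem
      obtain ⟨⟨h1, h2⟩, h3, h4⟩ := Set.mem_iUnion.1 hmem
      exact ⟨h0, n, h1, h2, h3, h4⟩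
  rw [this]
  refine isOpen_Ioi.inter (isOpen_iUnion fun n => isOpen_iUnion fun hn => ?_)
  exact (isOpen_Ioi.inter isOpen_Iio).preimage
    (dni_continuous.comp (continuous_rpow_nat n hn.2))

lemma Uset_dense_aux (Φ : ℕ → ℝ) (hΦ : ∀ n, 0 < Φ n) (N : ℕ) {a b : ℝ}
    (ha : 0 < a) (hab : a < b) : ∃ θ ∈ Set.Icc a b, θ ∈ Uset Φ N := by
  have hba : 0 < b - a := sub_pos.2 hab
  set n : ℕ := max N (⌈(4 : ℝ) ^ (b - a)⁻¹⌉₊ + 1) with hn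
  have hnN : N ≤ n := le_max_left _ _
  have hn1 : 1 ≤ n := le_trans (Nat.succ_le_succ (Nat.zero_le _)) (le_max_right _ _)
  have hn0 : 0 < n := hn1
  have hnR : (1 : ℝ) ≤ (n : ℝ) := by exact_mod_cast hn1
  have hnpos : (0 : ℝ) < (n : ℝ) := by linarith
  -- n ≥ 4^(1/(b-a))
  have hbig : (4 : ℝ) ^ (b - a)⁻¹ ≤ (n : ℝ) := by
    have h1 : (4 : ℝ) ^ (b - a)⁻¹ ≤ (⌈(4 : ℝ) ^ (b - a)⁻¹⌉₊ : ℝ) := Nat.le_ceil _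
    have h2 : (⌈(4 : ℝ) ^ (b - a)⁻¹⌉₊ : ℝ) ≤ (n : ℝ) := by
      exact_mod_cast le_trans (Nat.le_succ _) (le_max_right _ _)
    linarith
  have h4 : (4 : ℝ) ≤ (n : ℝ) ^ (b - a) := by
    have := Real.rpow_le_rpow (Real.rpow_nonneg (by norm_num) _) hbig hba.le
    rwa [← Real.rpow_mul (by norm_num : (0 : ℝ) ≤ 4), inv_mul_cancel₀ (ne_of_gt hba),
      Real.rpow_one] at this
  have hna : (1 : ℝ) ≤ (n : ℝ) ^ a := Real.one_le_rpow hnR ha.le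
  have hsplit : (n : ℝ) ^ b = (n : ℝ) ^ a * (n : ℝ) ^ (b - a) := by
    rw [← Real.rpow_add hnpos]; ring_nf
  have hgap : (n : ℝ) ^ a + 3 ≤ (n : ℝ) ^ b := by nlinarith
  -- the target value
  set m : ℤ := ⌈(n : ℝ) ^ a⌉ with hm
  set δ : ℝ := min (Φ n) 1 / 4 with hδ
  have hδpos : 0 < δ := by
    have := hΦ n
    have : (0 : ℝ) < min (Φ n) 1 := lt_min this one_pos
    simp only [hδ]; linarith
  have hδlt : δ ≤ 1 / 4 := by
    have : min (Φ n) 1 ≤ 1 := min_le_right _ _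
    simp only [hδ]; linarith
  have hδΦ : δ < Φ n := by
    have h1 : min (Φ n) 1 ≤ Φ n := min_le_left _ _
    have := hΦ n
    simp only [hδ]; linarith
  have hmge : (n : ℝ) ^ a ≤ (m : ℝ) := Int.le_ceil _
  have hmlt : (m : ℝ) < (n : ℝ) ^ a + 1 := Int.ceil_lt_add_one _
  set y : ℝ := (m : ℝ) + δ with hy
  have hcont : ContinuousOn (fun θ : ℝ => (n : ℝ) ^ θ) (Set.Icc a b) :=
    (continuous_rpow_nat n hn0).continuousOn
  have hmem : y ∈ Set.Icc ((n : ℝ) ^ a) ((n : ℝ) ^ b) := by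
    constructor
    · simp only [hy]; linarith
    · simp only [hy]; linarith
  obtain ⟨θ, hθI, hθy⟩ := intermediate_value_Icc hab.le hcont hmem
  have hθy' : (n : ℝ) ^ θ = (m : ℝ) + δ := hθy
  refine ⟨θ, hθI, lt_of_lt_of_le ha hθI.1, n, hnN, hn0, ?_, ?_⟩
  · refine dni_pos (m := m) ?_ ?_ <;> rw [hθy'] <;> linarith
  · rw [hθy']
    have h5 := dni_le ((m : ℝ) + δ) m
    rw [add_sub_cancel_left, abs_of_pos hδpos] at h5
    linarith

lemma Vset_open (Φ : ℕ → ℝ) (N : ℕ) : IsOpen (Vset Φ N) :=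
  (Uset_open Φ N).union isOpen_Iio

lemma Vset_dense (Φ : ℕ → ℝ) (hΦ : ∀ n, 0 < Φ n) (N : ℕ) : Dense (Vset Φ N) := by
  rw [dense_iff_exists_between]
  intro a b hab
  by_cases h : a < ((N : ℝ) + 1)⁻¹
  · set c := (a + min ((N : ℝ) + 1)⁻¹ b) / 2 with hc
    have hminb : a < min ((N : ℝ) + 1)⁻¹ b := lt_min h hab
    refine ⟨c, Or.inr ?_, ?_, ?_⟩
    · have : c < min ((N : ℝ) + 1)⁻¹ b := by simp only [hc]; linarith
      exact lt_of_lt_of_le this (min_le_left _ _)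
    · simp only [hc]; linarith
    · have : c < min ((N : ℝ) + 1)⁻¹ b := by simp only [hc]; linarith
      exact lt_of_lt_of_le this (min_le_right _ _)
  · push_neg at h
    have hNpos : (0 : ℝ) < ((N : ℝ) + 1)⁻¹ := by positivity
    have ha : 0 < a := lt_of_lt_of_le hNpos h
    set c := a + (b - a) / 3 with hc
    set d := b - (b - a) / 3 with hd
    have hcpos : 0 < c := by simp only [hc]; linarith
    have hcd : c < d := by simp only [hc, hd]; linarith
    obtain ⟨θ, hθI, hθU⟩ := Uset_dense_aux Φ hΦ N hcpos hcd
    refine ⟨θ, Or.inl hθU, ?_, ?_⟩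
    · have := hθI.1; simp only [hc] at this; linarith
    · have := hθI.2; simp only [hd] at this; linarith

lemma Tset_subset (Φ : ℕ → ℝ) : (⋂ N, Vset Φ N) ∩ Set.Ioi 0 ⊆ goodSet Φ := by
  rintro θ ⟨hT, hθ⟩
  have hθ0 : (0 : ℝ) < θ := hθ
  refine ⟨hθ0, ?_⟩
  have key : ∀ N : ℕ, ∃ n : ℕ, N ≤ n ∧ n ∈
      {n : ℕ | 0 < n ∧ 0 < distNearestInt ((n : ℝ) ^ θ) ∧
        distNearestInt ((n : ℝ) ^ θ) ≤ Φ n} := by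
    intro N
    set M : ℕ := max N ⌈θ⁻¹⌉₊ with hM
    have hVM : θ ∈ Vset Φ M := Set.mem_iInter.1 hT M
    have hnot : ¬ θ < ((M : ℝ) + 1)⁻¹ := by
      push_neg
      have h1 : θ⁻¹ ≤ (⌈θ⁻¹⌉₊ : ℝ) := Nat.le_ceil _
      have h2 : (⌈θ⁻¹⌉₊ : ℝ) ≤ (M : ℝ) := by exact_mod_cast le_max_right N _
      have h3 : θ⁻¹ < (M : ℝ) + 1 := by linarith
      have hMpos : (0 : ℝ) < (M : ℝ) + 1 := by positivity
      calc ((M : ℝ) + 1)⁻¹ ≤ (θ⁻¹)⁻¹ := by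
            apply inv_anti₀ (by positivity) h3.le
        _ = θ := inv_inv θ
    have hUM : θ ∈ Uset Φ M := hVM.resolve_right hnot
    obtain ⟨-, n, hnM, hn0, hd1, hd2⟩ := hUM
    exact ⟨n, le_trans (le_max_left _ _) hnM, hn0, hd1, hd2.le⟩
  intro hfin
  obtain ⟨C, hC⟩ := hfin.bddAbove
  obtain ⟨n, hnC, hn⟩ := key (C + 1)
  exact absurd (hC hn) (by omega)

theorem stmt_8 (Φ : ℕ → ℝ) (hΦ : ∀ n, 0 < Φ n) :
    ¬ ({θ : ℝ | 0 < θ ∧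
        {n : ℕ | 0 < n ∧ 0 < distNearestInt ((n : ℝ) ^ θ) ∧
          distNearestInt ((n : ℝ) ^ θ) ≤ Φ n}.Infinite}).Countable ∧
    Set.Ioi (0 : ℝ) ⊆ closure {θ : ℝ | 0 < θ ∧
        {n : ℕ | 0 < n ∧ 0 < distNearestInt ((n : ℝ) ^ θ) ∧
          distNearestInt ((n : ℝ) ^ θ) ≤ Φ n}.Infinite} := by
  have hTres : (⋂ N, Vset Φ N) ∈ residual ℝ := by
    rw [mem_residual]
    exact ⟨_, subset_rfl, IsGδ.iInter fun N => (Vset_open Φ N).isGδ,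
      dense_iInter_of_isOpen (Vset_open Φ) (Vset_dense Φ hΦ)⟩
  have hTdense : Dense (⋂ N, Vset Φ N) := dense_of_mem_residual hTres
  constructor
  · intro hS
    have hcompl : (goodSet Φ)ᶜ ∈ residual ℝ := by
      rw [mem_residual]
      exact ⟨_, subset_rfl, hS.isGδ_compl, hS.dense_compl ℝ⟩
    have hboth := Filter.inter_mem hTres hcompl
    obtain ⟨θ, hθmem, hθ⟩ :=
      (dense_of_mem_residual hboth).exists_mem_open isOpen_Ioi ⟨1, Set.mem_Ioi.2 one_pos⟩
    exact hθmem.2 (Tset_subset Φ ⟨hθmem.1, hθ⟩)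
  · intro x hx
    rw [_root_.mem_closure_iff]
    intro o ho hxo
    have hopen : IsOpen (o ∩ Set.Ioi 0) := ho.inter isOpen_Ioi
    obtain ⟨θ, hθT, hθo⟩ := hTdense.exists_mem_open hopen ⟨x, hxo, hx⟩
    exact ⟨θ, hθo.1, Tset_subset Φ ⟨hθT, hθo.2⟩⟩
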